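/- arXiv:2403.04630 — 2 statements merged into one kernel-verified Lean document; each statement's English description precedes it below -/
import Mathlib

section
/- Let ε > 0, c ∈ ℕ with c ≥ 1, τ ∈ ℝ, T ∈ ℕ, and q_1, ..., q_T ∈ ℝ. Let Z, Z_1, ..., Z_T be independent real random variables, where Z has the Laplace distribution with scale 2/ε and each Z_t has the Laplace distribution with scale 4c/ε. If x ≥ 0 and q_t ≥ x + τ for some t ∈ [T], then P(∃ t' ≤ t such that q_{t'} + Z_{t'} ≥ τ + Z) ≥ 1 − exp(−x·ε/(8c)). (This event is exactly the event that the sparse vector mechanism with threshold τ, privacy parameter ε, and cutoff c ≥ 1 on queries q_1, ..., q_T outputs ⊥ at or before time t.) -/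
open MeasureTheory

/-- The Laplace distribution with scale `b`: the measure on `ℝ` with density
`(1/(2b))·e^{−|z|/b}` with respect to Lebesgue measure. -/
noncomputable def laplace (b : ℝ) : Measure ℝ :=
  (volume : Measure ℝ).withDensity
    (fun z => ENNReal.ofReal ((1 / (2 * b)) * Real.exp (-|z| / b)))

instance (b : ℝ) : SigmaFinite (laplace b) := by
  unfold laplace
  infer_instance

section Aux

open Set

lemma lap_int_Ioi {b : ℝ} (hb : 0 < b) (a : ℝ) :
    IntegrableOn (fun z : ℝ => Real.exp (-z / b)) (Ioi a) := by
  have h := exp_neg_integrableOn_Ioi a (inv_pos.2 hb)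
  have e : (fun z : ℝ => Real.exp (-z / b)) = fun x : ℝ => Real.exp (-b⁻¹ * x) := by
    funext z; congr 1; field_simp
  rw [e]; exact h

lemma lap_int_Iic {b : ℝ} (hb : 0 < b) (a : ℝ) :
    IntegrableOn (fun z : ℝ => Real.exp (z / b)) (Iic (-a)) := by
  rw [← Measure.map_neg_eq_self (volume : Measure ℝ)]
  have m : MeasurableEmbedding fun x : ℝ => -x := (Homeomorph.neg ℝ).measurableEmbedding
  rw [m.integrableOn_map_iff]
  simp_rw [Function.comp_def, neg_preimage, neg_Iic, neg_neg]
  refine Iff.mpr integrableOn_Ici_iff_integrableOn_Ioi ?_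
  have h := lap_int_Ioi hb a
  refine h.congr_fun (fun z _ => ?_) measurableSet_Ioi
  congr 1

lemma lap_integral_Ioi {b : ℝ} (hb : 0 < b) (a : ℝ) :
    ∫ z in Ioi a, Real.exp (-z / b) = b * Real.exp (-a / b) := by
  have h := integral_comp_mul_right_Ioi (fun y => Real.exp (-y)) a (inv_pos.2 hb)
  simp only [smul_eq_mul, inv_inv, integral_exp_neg_Ioi] at h
  calc ∫ z in Ioi a, Real.exp (-z / b) = ∫ x in Ioi a, Real.exp (-(x * b⁻¹)) := by
        refine setIntegral_congr_fun measurableSet_Ioi fun z _ => ?_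
        congr 1; field_simp
    _ = b * Real.exp (-(a * b⁻¹)) := h
    _ = b * Real.exp (-a / b) := by rw [div_eq_mul_inv, neg_mul]

lemma lap_integral_Iic {b : ℝ} (hb : 0 < b) (a : ℝ) :
    ∫ z in Iic (-a), Real.exp (z / b) = b * Real.exp (-a / b) := by
  have h := integral_comp_neg_Ioi a (fun z : ℝ => Real.exp (z / b))
  simp only [neg_div] at h ⊢
  rw [← h]
  have : ∀ x : ℝ, Real.exp (-x / b) = Real.exp (-(x / b)) := by intro x; rw [neg_div]
  simpa [neg_div] using lap_integral_Ioi hb a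

lemma laplace_Ici {b a : ℝ} (hb : 0 < b) (ha : 0 ≤ a) :
    laplace b (Ici a) = ENNReal.ofReal (1 / 2 * Real.exp (-a / b)) := by
  rw [laplace, withDensity_apply _ measurableSet_Ici]
  have hcong : ∫⁻ z in Ici a, ENNReal.ofReal (1 / (2 * b) * Real.exp (-|z| / b))
      = ∫⁻ z in Ici a, ENNReal.ofReal (1 / (2 * b) * Real.exp (-z / b)) := by
    refine setLIntegral_congr_fun_ae measurableSet_Ici (Filter.Eventually.of_forall fun z hz => ?_)
    rw [abs_of_nonneg (ha.trans hz)]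
  rw [hcong, ← ofReal_integral_eq_lintegral_ofReal]
  · congr 1
    rw [integral_Ici_eq_integral_Ioi, integral_const_mul, lap_integral_Ioi hb a]
    field_simp
  · exact (Iff.mpr integrableOn_Ici_iff_integrableOn_Ioi (lap_int_Ioi hb a)).const_mul _
  · exact Filter.Eventually.of_forall fun z => by positivity

lemma laplace_Iic_neg {b a : ℝ} (hb : 0 < b) (ha : 0 ≤ a) :
    laplace b (Iic (-a)) = ENNReal.ofReal (1 / 2 * Real.exp (-a / b)) := by
  rw [laplace, withDensity_apply _ measurableSet_Iic]
  have hcong : ∫⁻ z in Iic (-a), ENNReal.ofReal (1 / (2 * b) * Real.exp (-|z| / b))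
      = ∫⁻ z in Iic (-a), ENNReal.ofReal (1 / (2 * b) * Real.exp (z / b)) := by
    refine setLIntegral_congr_fun_ae measurableSet_Iic (Filter.Eventually.of_forall fun z hz => ?_)
    rw [abs_of_nonpos (hz.trans (neg_nonpos.mpr ha)), neg_neg]
  rw [hcong, ← ofReal_integral_eq_lintegral_ofReal]
  · congr 1
    rw [integral_const_mul, lap_integral_Iic hb a]
    field_simp
  · exact (lap_int_Iic hb a).const_mul _
  · exact Filter.Eventually.of_forall fun z => by positivity

lemma laplace_singleton {b : ℝ} (a : ℝ) : laplace b {a} = 0 :=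
  (withDensity_absolutelyContinuous _ _) (measure_singleton a)

lemma laplace_Ioi {b a : ℝ} (hb : 0 < b) (ha : 0 ≤ a) :
    laplace b (Ioi a) = ENNReal.ofReal (1 / 2 * Real.exp (-a / b)) := by
  have h : laplace b (Ici a) = laplace b (Ioi a) := by
    rw [← Ici_sdiff_left, measure_diff_null (laplace_singleton a)]
  rw [← h, laplace_Ici hb ha]

lemma laplace_Iio_neg {b a : ℝ} (hb : 0 < b) (ha : 0 ≤ a) :
    laplace b (Iio (-a)) = ENNReal.ofReal (1 / 2 * Real.exp (-a / b)) := by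
  have h : laplace b (Iic (-a)) = laplace b (Iio (-a)) := by
    rw [← Iic_diff_right, measure_diff_null (laplace_singleton (-a))]
  rw [← h, laplace_Iic_neg hb ha]

lemma laplace_isProbability {b : ℝ} (hb : 0 < b) : IsProbabilityMeasure (laplace b) := by
  constructor
  rw [← Set.Iic_union_Ioi (a := (0 : ℝ)),
    measure_union (Iic_disjoint_Ioi le_rfl) measurableSet_Ioi]
  have h1 : laplace b (Iic 0) = ENNReal.ofReal (1 / 2 * Real.exp (-0 / b)) := by
    simpa using laplace_Iic_neg hb (le_refl 0)
  rw [h1, laplace_Ioi hb (le_refl 0)]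
  rw [← ENNReal.ofReal_add (by positivity) (by positivity)]
  norm_num

lemma laplace_Iic' {b a : ℝ} (hb : 0 < b) (ha : 0 ≤ a) :
    laplace b (Iic a) = ENNReal.ofReal (1 - 1 / 2 * Real.exp (-a / b)) := by
  haveI := laplace_isProbability hb
  have h : Iic a = (Ioi a)ᶜ := by simp
  rw [h, measure_compl measurableSet_Ioi (measure_ne_top _ _), laplace_Ioi hb ha, measure_univ,
    ENNReal.ofReal_sub _ (by positivity), ENNReal.ofReal_one]

lemma laplace_Ici_neg' {b a : ℝ} (hb : 0 < b) (ha : 0 ≤ a) :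
    laplace b (Ici (-a)) = ENNReal.ofReal (1 - 1 / 2 * Real.exp (-a / b)) := by
  haveI := laplace_isProbability hb
  have h : Ici (-a) = (Iio (-a))ᶜ := by simp
  rw [h, measure_compl measurableSet_Iio (measure_ne_top _ _), laplace_Iio_neg hb ha, measure_univ,
    ENNReal.ofReal_sub _ (by positivity), ENNReal.ofReal_one]

end Aux

/-- the sparse vector mechanism outputs `⊥` when the answer is far
above the threshold.
Let `Z ~ Laplace(2/ε)` and `Z_1, …, Z_T ~ Laplace(4c/ε)` be independent (modelled by a
product measure with first coordinate `Z` and second coordinate the vector of the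
`Z_t`).  If `x ≥ 0` and `q_t ≥ x + τ` for some `t ∈ [T]`, then the probability that
`q_{t'} + Z_{t'} ≥ τ + Z` for some `t' ≤ t` is at least `1 − exp(−xε/(8c))`.
(This is exactly the event that the sparse vector mechanism with threshold `τ`, privacy
parameter `ε`, and cutoff `c ≥ 1` outputs `⊥` at or before time `t`.) -/
theorem svt_outputs_bot_when_above_threshold (ε : ℝ) (hε : 0 < ε) (c : ℕ) (hc : 1 ≤ c)
    (τ : ℝ) (T : ℕ) (q : Fin T → ℝ) (x : ℝ) (hx : 0 ≤ x)
    (t : Fin T) (hq : x + τ ≤ q t) :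
    ENNReal.ofReal (1 - Real.exp (-(x * ε) / (8 * c)))
      ≤ ((laplace (2 / ε)).prod (Measure.pi fun _ : Fin T => laplace (4 * c / ε)))
          {p : ℝ × (Fin T → ℝ) | ∃ t' : Fin T, t' ≤ t ∧ τ + p.1 ≤ q t' + p.2 t'} := by
  classical
  have hc1 : (1 : ℝ) ≤ (c : ℝ) := by exact_mod_cast hc
  have hc0 : (0 : ℝ) < (c : ℝ) := by linarith
  have hb1 : (0 : ℝ) < 2 / ε := by positivity
  have hb2 : (0 : ℝ) < 4 * (c : ℝ) / ε := by positivity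
  haveI i1 := laplace_isProbability hb1
  haveI i2 := laplace_isProbability hb2
  have hsub : (Set.Iic (x / 2)) ×ˢ (Function.eval t ⁻¹' Set.Ici (-(x / 2)))
      ⊆ {p : ℝ × (Fin T → ℝ) | ∃ t' : Fin T, t' ≤ t ∧ τ + p.1 ≤ q t' + p.2 t'} := by
    rintro ⟨z, f⟩ ⟨h1, h2⟩
    simp only [Set.mem_Iic] at h1
    simp only [Set.mem_preimage, Set.mem_Ici, Function.eval] at h2
    exact ⟨t, le_rfl, by linarith⟩
  refine le_trans ?_ (measure_mono hsub)
  rw [Measure.prod_prod]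
  have hcyl : (Measure.pi fun _ : Fin T => laplace (4 * (c : ℝ) / ε))
      (Function.eval t ⁻¹' Set.Ici (-(x / 2))) = laplace (4 * (c : ℝ) / ε) (Set.Ici (-(x / 2))) := by
    rw [Set.eval_preimage, Measure.pi_pi]
    rw [Finset.prod_eq_single t
      (fun j _ hj => by rw [Function.update_of_ne hj]; exact measure_univ)
      (fun h => absurd (Finset.mem_univ t) h)]
    rw [Function.update_self]
  have hx2 : (0 : ℝ) ≤ x / 2 := by positivity
  rw [hcyl, laplace_Iic' hb1 hx2, laplace_Ici_neg' hb2 hx2,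
    ← ENNReal.ofReal_mul (by
      have : Real.exp (-(x / 2) / (2 / ε)) ≤ 1 := by
        rw [← Real.exp_zero]
        apply Real.exp_le_exp.mpr
        have : (0 : ℝ) ≤ (x / 2) / (2 / ε) := by positivity
        linarith [neg_div (2 / ε) (x / 2)]
      linarith)]
  apply ENNReal.ofReal_le_ofReal
  have e1 : -(x / 2) / (2 / ε) = -(x * ε) / 4 := by field_simp; norm_num
  have e2 : -(x / 2) / (4 * (c : ℝ) / ε) = -(x * ε) / (8 * c) := by field_simp; ring
  rw [e1, e2]
  set u := Real.exp (-(x * ε) / 4) with hu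
  set v := Real.exp (-(x * ε) / (8 * c)) with hv
  have hu0 : 0 < u := Real.exp_pos _
  have hv0 : 0 < v := Real.exp_pos _
  have huv : u ≤ v := by
    apply Real.exp_le_exp.mpr
    rw [neg_div, neg_div, neg_le_neg_iff]
    apply div_le_div_of_nonneg_left (by positivity) (by positivity)
    linarith
  nlinarith [mul_pos hu0 hv0]
end

section
/- (Incremental edge-sensitivity of triangle counts.) Let D ∈ ℕ and let f_triangles(S)_t denote the number of triangles in flat(S_[t]). For every T ∈ ℕ and every pair of edge-neighboring insertion-only graph streams S, S' of length T whose flattened graphs flat(S_[T]) and flat(S'_[T]) have maximum degree at most D, the ℓ1 distance between the increment sequences satisfies Σ_{t=1}^{T} |inc_{f_triangles}(S)_t − inc_{f_triangles}(S')_t| ≤ D − 1; moreover, this bound is attained, even by a pair of such streams of length T = 1. -/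
open Finset

/-- A finite graph: a finite vertex set together with a finite set of undirected edges. -/
structure FinGraph where
  verts : Finset ℕ
  edges : Finset (Sym2 ℕ)

namespace FinGraph

/-- A finite graph is valid if every edge is a non-loop both of whose endpoints are vertices. -/
def Valid (G : FinGraph) : Prop :=
  ∀ e ∈ G.edges, ¬ e.IsDiag ∧ ∀ v ∈ e, v ∈ G.verts

/-- The degree of a vertex: the number of edges containing it. -/
def degree (G : FinGraph) (v : ℕ) : ℕ :=
  (G.edges.filter (fun e => v ∈ e)).card

/-- Remove a node and all of its adjacent edges. -/
def removeNode (G : FinGraph) (v : ℕ) : FinGraph :=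
  ⟨G.verts.erase v, G.edges.filter (fun e => v ∉ e)⟩

/-- Remove a single edge. -/
def removeEdge (G : FinGraph) (e : Sym2 ℕ) : FinGraph :=
  ⟨G.verts, G.edges.erase e⟩

/-- `G` is `(D, ℓ)`-bounded: it has at most `ℓ` nodes of degree greater than `D`. -/
def DLBounded (G : FinGraph) (D ℓ : ℕ) : Prop :=
  (G.verts.filter (fun v => D < G.degree v)).card ≤ ℓ

end FinGraph

/-- One graph is obtained from the other by removing one node and all of its adjacent edges. -/
def nodeNeighborGraph (G G' : FinGraph) : Prop :=
  (∃ v ∈ G.verts, G' = G.removeNode v) ∨ (∃ v ∈ G'.verts, G = G'.removeNode v)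

/-- `G'` is obtained from `G` by removing a single edge, an isolated node,
or a degree-one node together with its adjacent edge. -/
def edgeRemovalGraph (G G' : FinGraph) : Prop :=
  (∃ e ∈ G.edges, G' = G.removeEdge e) ∨
  (∃ v ∈ G.verts, G.degree v = 0 ∧ G' = FinGraph.mk (G.verts.erase v) G.edges) ∨
  (∃ v ∈ G.verts, G.degree v = 1 ∧ G' = G.removeNode v)

/-- Edge-neighboring graphs. -/
def edgeNeighborGraph (G G' : FinGraph) : Prop :=
  edgeRemovalGraph G G' ∨ edgeRemovalGraph G' G

/-- The length of a shortest chain of valid graphs from `A` to `B` in which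
consecutive graphs are related by `R`. -/
noncomputable def graphChainDist (R : FinGraph → FinGraph → Prop) (A B : FinGraph) : ℕ :=
  sInf {n | ∃ f : ℕ → FinGraph, f 0 = A ∧ f n = B ∧ (∀ i ≤ n, (f i).Valid) ∧
    ∀ i < n, R (f i) (f (i + 1))}

/-- Node distance between finite graphs. -/
noncomputable def graphNodeDist : FinGraph → FinGraph → ℕ := graphChainDist nodeNeighborGraph

/-- Edge distance between finite graphs. -/
noncomputable def graphEdgeDist : FinGraph → FinGraph → ℕ := graphChainDist edgeNeighborGraph

/-- An insertion-only graph stream: the nodes and edges arriving at each time step. -/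
structure GraphStream where
  nodes : ℕ → Finset ℕ
  edges : ℕ → Finset (Sym2 ℕ)

namespace GraphStream

/-- Validity of a graph stream of length `T`: arrivals happen only at times `1, …, T`,
no node or edge arrives twice, and every edge is a non-loop whose endpoints
arrive at or before the edge does. -/
def Valid (T : ℕ) (S : GraphStream) : Prop :=
  (∀ t, ((S.nodes t).Nonempty ∨ (S.edges t).Nonempty) → 1 ≤ t ∧ t ≤ T) ∧
  (∀ s t, s ≠ t → Disjoint (S.nodes s) (S.nodes t)) ∧
  (∀ s t, s ≠ t → Disjoint (S.edges s) (S.edges t)) ∧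
  (∀ t, ∀ e ∈ S.edges t, ¬ e.IsDiag ∧ ∀ v ∈ e, ∃ s ≤ t, v ∈ S.nodes s)

/-- The flattened graph of the stream through time `t`. -/
def flat (S : GraphStream) (t : ℕ) : FinGraph :=
  ⟨(Finset.range (t + 1)).biUnion S.nodes, (Finset.range (t + 1)).biUnion S.edges⟩

/-- Remove a node and all of its adjacent edges from a stream. -/
def removeNode (S : GraphStream) (v : ℕ) : GraphStream :=
  ⟨fun t => (S.nodes t).erase v, fun t => (S.edges t).filter (fun e => v ∉ e)⟩

/-- Remove a single edge from a stream. -/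
def removeEdge (S : GraphStream) (e : Sym2 ℕ) : GraphStream :=
  ⟨S.nodes, fun t => (S.edges t).erase e⟩

/-- Truncation of a stream: keep only arrivals at times `≤ t`. -/
def trunc (S : GraphStream) (t : ℕ) : GraphStream :=
  ⟨fun s => if s ≤ t then S.nodes s else ∅, fun s => if s ≤ t then S.edges s else ∅⟩

/-- `v` arrives at some point in the stream. -/
def hasNode (S : GraphStream) (v : ℕ) : Prop :=
  ∃ t, v ∈ S.nodes t

/-- The stream is `(D, ℓ)`-bounded through time `t`. -/
def DLBoundedThrough (S : GraphStream) (D ℓ t : ℕ) : Prop :=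
  (S.flat t).DLBounded D ℓ

end GraphStream

/-- `S'` is obtained from `S` by removing one node and all of its adjacent edges
(which may arrive at many time steps). -/
def nodeRemovalStream (S S' : GraphStream) : Prop :=
  ∃ v, S.hasNode v ∧ S' = S.removeNode v

/-- Node-neighboring streams. -/
def nodeNeighborStream (S S' : GraphStream) : Prop :=
  nodeRemovalStream S S' ∨ nodeRemovalStream S' S

/-- `S'` is obtained from the length-`T` stream `S` by removing a single edge,
an isolated node, or a degree-one node together with its adjacent edge. -/
def edgeRemovalStream (T : ℕ) (S S' : GraphStream) : Prop :=
  (∃ t, ∃ e ∈ S.edges t, S' = S.removeEdge e) ∨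
  (∃ v, S.hasNode v ∧ (S.flat T).degree v ≤ 1 ∧ S' = S.removeNode v)

/-- Edge-neighboring streams (of length `T`). -/
def edgeNeighborStream (T : ℕ) (S S' : GraphStream) : Prop :=
  edgeRemovalStream T S S' ∨ edgeRemovalStream T S' S

/-- Length of a shortest chain of valid streams of length `T` in which consecutive
streams are related by `R`. -/
noncomputable def streamChainDist (T : ℕ) (R : GraphStream → GraphStream → Prop)
    (A B : GraphStream) : ℕ :=
  sInf {n | ∃ f : ℕ → GraphStream, f 0 = A ∧ f n = B ∧ (∀ i ≤ n, (f i).Valid T) ∧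
    ∀ i < n, R (f i) (f (i + 1))}

/-- Node distance between streams of length `T`. -/
noncomputable def streamNodeDist (T : ℕ) : GraphStream → GraphStream → ℕ :=
  streamChainDist T nodeNeighborStream

/-- Edge distance between streams of length `T`. -/
noncomputable def streamEdgeDist (T : ℕ) : GraphStream → GraphStream → ℕ :=
  streamChainDist T (edgeNeighborStream T)

/-- A fixed injective key on undirected edges, providing the consistent total order in
which edges arriving at the same time step are processed. -/
def edgeKey : Sym2 ℕ → ℕ :=
  Sym2.lift ⟨fun a b => Nat.pair (min a b) (max a b), fun a b => by
    dsimp only; rw [inf_comm, sup_comm]⟩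

/-- The two endpoints of an edge, as an ordered pair. -/
def endpointsOf (e : Sym2 ℕ) : ℕ × ℕ := (edgeKey e).unpair

/-- The edges of a finite edge set, listed in increasing `edgeKey` order. -/
def sortEdges (E : Finset (Sym2 ℕ)) : List (Sym2 ℕ) :=
  ((E.image edgeKey).sort (· ≤ ·)).map fun k => s(k.unpair.1, k.unpair.2)

/-- All edges of a stream of length `T`, tagged with their arrival times, in processing
order: lexicographically by (arrival time, consistent edge order). -/
def GraphStream.procList (S : GraphStream) (T : ℕ) : List (ℕ × Sym2 ℕ) :=
  (List.range (T + 1)).flatMap fun t => (sortEdges (S.edges t)).map fun e => (t, e)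

/-- One step of the greedy projection with degree bound `D`.  The state consists of the
degree counters together with the edges kept so far (indexed by arrival time).
If `bbds = true` the counters of the endpoints are incremented for every processed edge
(the BBDS rule); if `bbds = false` they are incremented only when the edge is kept
(the DLL rule). -/
def projStep (D : ℕ) (bbds : Bool) (st : (ℕ → ℕ) × (ℕ → Finset (Sym2 ℕ)))
    (p : ℕ × Sym2 ℕ) : (ℕ → ℕ) × (ℕ → Finset (Sym2 ℕ)) :=
  let d := st.1
  let u := (endpointsOf p.2).1
  let v := (endpointsOf p.2).2
  let keep : Bool := decide (d u < D ∧ d v < D)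
  ((if bbds || keep then fun w => if w = u ∨ w = v then d w + 1 else d w else d),
   (if keep then fun s => if s = p.1 then insert p.2 (st.2 s) else st.2 s else st.2))

/-- The time-aware projection with degree bound `D` on streams of length `T`:
the BBDS projection if `bbds = true` and the DLL projection if `bbds = false`.
All arriving nodes are kept; an arriving edge is kept (at its arrival time) iff both of
its endpoints have counter value `< D` when the edge is processed. -/
def project (bbds : Bool) (D T : ℕ) (S : GraphStream) : GraphStream :=
  ⟨S.nodes,
   ((S.procList T).foldl (projStep D bbds)
      ((fun _ => 0 : ℕ → ℕ), (fun _ => ∅ : ℕ → Finset (Sym2 ℕ)))).2⟩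

/-- The BBDS projection `Π^BBDS_D` on streams of length `T`. -/
def projBBDS (D T : ℕ) : GraphStream → GraphStream := project true D T

/-- The DLL projection `Π^DLL_D` on streams of length `T`. -/
def projDLL (D T : ℕ) : GraphStream → GraphStream := project false D T

open Classical in
/-- The number of triangles of a finite graph: the number of three-element sets of
vertices that are mutually adjacent. -/
noncomputable def FinGraph.triangleCount (G : FinGraph) : ℕ :=
  ((G.verts.powersetCard 3).filter
    fun s => ∀ u ∈ s, ∀ v ∈ s, u ≠ v → s(u, v) ∈ G.edges).card

/-! ### Auxiliary machinery -/

open Classical in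
/-- The set of triangles of a finite graph. -/
noncomputable def triSet (G : FinGraph) : Finset (Finset ℕ) :=
  (G.verts.powersetCard 3).filter
    fun s => ∀ u ∈ s, ∀ v ∈ s, u ≠ v → s(u, v) ∈ G.edges

lemma triangleCount_eq_card (G : FinGraph) : G.triangleCount = (triSet G).card := by
  unfold FinGraph.triangleCount triSet
  congr 1
  exact Finset.filter_congr_decidable ..

lemma mem_triSet {G : FinGraph} {s : Finset ℕ} :
    s ∈ triSet G ↔ (s ⊆ G.verts ∧ s.card = 3) ∧
      ∀ u ∈ s, ∀ v ∈ s, u ≠ v → s(u, v) ∈ G.edges := by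
  classical
  simp [triSet, Finset.mem_filter, Finset.mem_powersetCard]

lemma triSet_mono {G H : FinGraph} (hv : G.verts ⊆ H.verts) (he : G.edges ⊆ H.edges) :
    triSet G ⊆ triSet H := by
  intro s hs
  rw [mem_triSet] at hs ⊢
  exact ⟨⟨hs.1.1.trans hv, hs.1.2⟩, fun u hu v hv' huv => he (hs.2 u hu v hv' huv)⟩

lemma triSet_empty_edges {G : FinGraph} (h : G.edges = ∅) : triSet G = ∅ := by
  ext s
  simp only [mem_triSet, Finset.notMem_empty, iff_false, not_and]
  rintro ⟨-, hcard⟩ h2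
  obtain ⟨u, hu, v, hv, huv⟩ := Finset.one_lt_card.1 (by omega : 1 < s.card)
  have := h2 u hu v hv huv
  simp [h] at this

lemma flat_removeEdge (S : GraphStream) (e : Sym2 ℕ) (t : ℕ) :
    (S.removeEdge e).flat t =
      ⟨(S.flat t).verts, (S.flat t).edges.erase e⟩ := by
  unfold GraphStream.flat GraphStream.removeEdge
  congr 1
  ext x
  simp only [Finset.mem_biUnion, Finset.mem_erase]
  tauto

lemma flat_removeNode (S : GraphStream) (v : ℕ) (t : ℕ) :
    (S.removeNode v).flat t =
      ⟨(S.flat t).verts.erase v, (S.flat t).edges.filter (fun e => v ∉ e)⟩ := by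
  unfold GraphStream.flat GraphStream.removeNode
  congr 1
  · ext x
    simp only [Finset.mem_biUnion, Finset.mem_erase]
    tauto
  · ext x
    simp only [Finset.mem_biUnion, Finset.mem_filter]
    tauto

lemma flat_verts_mono (S : GraphStream) {s t : ℕ} (h : s ≤ t) :
    (S.flat s).verts ⊆ (S.flat t).verts :=
  Finset.biUnion_subset_biUnion_of_subset_left _
    (Finset.range_subset_range.2 (by omega))

lemma flat_edges_mono (S : GraphStream) {s t : ℕ} (h : s ≤ t) :
    (S.flat s).edges ⊆ (S.flat t).edges :=
  Finset.biUnion_subset_biUnion_of_subset_left _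
    (Finset.range_subset_range.2 (by omega))

lemma flat_zero_edges {T : ℕ} {S : GraphStream} (hS : S.Valid T) :
    (S.flat 0).edges = ∅ := by
  have : S.edges 0 = ∅ := by
    by_contra h
    have := (hS.1 0 (Or.inr (Finset.nonempty_iff_ne_empty.2 h))).1
    omega
  simp [GraphStream.flat, this]

lemma flat_zero_verts {T : ℕ} {S : GraphStream} (hS : S.Valid T) :
    (S.flat 0).verts = ∅ := by
  have : S.nodes 0 = ∅ := by
    by_contra h
    have := (hS.1 0 (Or.inl (Finset.nonempty_iff_ne_empty.2 h))).1
    omega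
  simp [GraphStream.flat, this]

/-- Key counting lemma: the triangles through an edge `s(a,b)` inject into the
other edges at `a`. -/
lemma card_triDiff_le {V : Finset ℕ} {E : Finset (Sym2 ℕ)} {a b : ℕ} (hab : a ≠ b)
    (he : s(a, b) ∈ E) :
    (triSet ⟨V, E⟩ \ triSet ⟨V, E.erase s(a, b)⟩).card ≤
      (E.filter (fun e => a ∈ e)).card - 1 := by
  classical
  set Dif := triSet ⟨V, E⟩ \ triSet ⟨V, E.erase s(a, b)⟩ with hDif
  have hinj : ∀ s ∈ Dif, ∃ w, (s.erase a).erase b = {w} ∧ w ≠ a ∧ w ≠ b ∧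
      w ∈ s ∧ s = insert a (insert b {w}) := by
    intro s hs
    rw [hDif, Finset.mem_sdiff, mem_triSet, mem_triSet] at hs
    obtain ⟨⟨h1, h2⟩, h3⟩ := hs
    push_neg at h3
    obtain ⟨u, hu, v, hv, huv, hne⟩ := h3 h1
    have hE := h2 u hu v hv huv
    have huvab : s(u, v) = s(a, b) := by
      by_contra h
      exact hne (Finset.mem_erase.2 ⟨h, hE⟩)
    rw [Sym2.eq_iff] at huvab
    have hab' : a ∈ s ∧ b ∈ s := by
      rcases huvab with ⟨rfl, rfl⟩ | ⟨rfl, rfl⟩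
      · exact ⟨hu, hv⟩
      · exact ⟨hv, hu⟩
    obtain ⟨ha, hb⟩ := hab'
    have hcard : s.card = 3 := h1.2
    have h1' : ((s.erase a).erase b).card = 1 := by
      rw [Finset.card_erase_of_mem (Finset.mem_erase.2 ⟨Ne.symm hab, hb⟩),
        Finset.card_erase_of_mem ha, hcard]
    obtain ⟨w, hw⟩ := Finset.card_eq_one.1 h1'
    have hwmem : w ∈ (s.erase a).erase b := hw ▸ Finset.mem_singleton_self w
    rw [Finset.mem_erase, Finset.mem_erase] at hwmem
    refine ⟨w, hw, hwmem.2.1, hwmem.1, hwmem.2.2, ?_⟩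
    apply (Finset.eq_of_subset_of_card_le ?_ ?_).symm
    · intro x hx
      rcases Finset.mem_insert.1 hx with rfl | hx
      · exact ha
      rcases Finset.mem_insert.1 hx with rfl | hx
      · exact hb
      rw [Finset.mem_singleton] at hx
      subst hx; exact hwmem.2.2
    · rw [hcard]
      have hb1 : b ∉ ({w} : Finset ℕ) := by simp [Ne.symm hwmem.1]
      have ha1 : a ∉ insert b ({w} : Finset ℕ) := by simp [hab, Ne.symm hwmem.2.1]
      rw [Finset.card_insert_of_notMem ha1, Finset.card_insert_of_notMem hb1,
        Finset.card_singleton]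
  have habfil : s(a, b) ∈ E.filter (fun e => a ∈ e) :=
    Finset.mem_filter.2 ⟨he, Sym2.mem_mk_left a b⟩
  have hcard_erase : ((E.filter (fun e => a ∈ e)).erase s(a, b)).card =
      (E.filter (fun e => a ∈ e)).card - 1 := Finset.card_erase_of_mem habfil
  rw [← hcard_erase]
  apply Finset.card_le_card_of_injOn (fun s => s(a, ((s.erase a).erase b).sum id))
  · intro s hs
    obtain ⟨w, hw, hwa, hwb, hws, hseq⟩ := hinj s hs
    have hsum : ((s.erase a).erase b).sum id = w := by rw [hw]; simp
    rw [Finset.mem_coe, Finset.mem_sdiff, mem_triSet] at hs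
    have hE : s(a, w) ∈ E := hs.1.2 a (hseq ▸ Finset.mem_insert_self a _) w hws
      (Ne.symm hwa)
    simp only [hsum]
    refine Finset.mem_erase.2 ⟨?_, Finset.mem_filter.2 ⟨hE, Sym2.mem_mk_left a w⟩⟩
    intro hcon
    rw [Sym2.eq_iff] at hcon
    rcases hcon with ⟨-, h⟩ | ⟨h, -⟩
    · exact hwb h
    · exact hab h
  · intro s1 h1 s2 h2 heq
    obtain ⟨w1, hw1, hw1a, _, _, hs1⟩ := hinj s1 h1
    obtain ⟨w2, hw2, hw2a, _, _, hs2⟩ := hinj s2 h2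
    have hsum1 : ((s1.erase a).erase b).sum id = w1 := by rw [hw1]; simp
    have hsum2 : ((s2.erase a).erase b).sum id = w2 := by rw [hw2]; simp
    simp only [hsum1, hsum2, Sym2.eq_iff] at heq
    have : w1 = w2 := by
      rcases heq with ⟨-, h⟩ | ⟨-, h'⟩
      · exact h
      · exact absurd h' hw1a
    rw [hs1, hs2, this]

lemma exists_pair_eq {V : Finset ℕ} {E : Finset (Sym2 ℕ)} {e : Sym2 ℕ} {s : Finset ℕ}
    (h1 : s ∈ triSet ⟨V, E⟩) (h2 : s ∉ triSet ⟨V, E.erase e⟩) :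
    ∃ u ∈ s, ∃ v ∈ s, u ≠ v ∧ s(u, v) = e := by
  rw [mem_triSet] at h1 h2
  push_neg at h2
  obtain ⟨u, hu, v, hv, huv, hne⟩ := h2 h1.1
  refine ⟨u, hu, v, hv, huv, ?_⟩
  by_contra h
  exact hne (Finset.mem_erase.2 ⟨h, h1.2 u hu v hv huv⟩)

/-- Removing a node of degree at most one does not change the triangle set. -/
lemma triSet_removeNode_eq {V : Finset ℕ} {E E' : Finset (Sym2 ℕ)} {v : ℕ}
    (hEE' : E ⊆ E') (hdeg : (E'.filter (fun e => v ∈ e)).card ≤ 1) :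
    triSet ⟨V.erase v, E.filter (fun e => v ∉ e)⟩ = triSet ⟨V, E⟩ := by
  ext s
  constructor
  · intro hs
    rw [mem_triSet] at hs ⊢
    exact ⟨⟨hs.1.1.trans (Finset.erase_subset _ _), hs.1.2⟩,
      fun u hu w hw huw => (Finset.mem_filter.1 (hs.2 u hu w hw huw)).1⟩
  · intro hs
    rw [mem_triSet] at hs ⊢
    have hvs : v ∉ s := by
      intro hv
      have h2 : 1 < (s.erase v).card := by
        rw [Finset.card_erase_of_mem hv, hs.1.2]
        omega
      obtain ⟨u, hu, w, hw, huw⟩ := Finset.one_lt_card.1 h2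
      rw [Finset.mem_erase] at hu hw
      have e1 : s(v, u) ∈ E := hs.2 v hv u hu.2 (Ne.symm hu.1)
      have e2 : s(v, w) ∈ E := hs.2 v hv w hw.2 (Ne.symm hw.1)
      have : 1 < (E'.filter (fun e => v ∈ e)).card := by
        refine Finset.one_lt_card.2 ⟨s(v, u), ?_, s(v, w), ?_, ?_⟩
        · exact Finset.mem_filter.2 ⟨hEE' e1, Sym2.mem_mk_left v u⟩
        · exact Finset.mem_filter.2 ⟨hEE' e2, Sym2.mem_mk_left v w⟩
        · intro h
          rw [Sym2.eq_iff] at h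
          rcases h with ⟨-, h⟩ | ⟨h, -⟩
          · exact huw h
          · exact hw.1 h.symm
      omega
    refine ⟨⟨fun x hx => Finset.mem_erase.2 ⟨fun h => hvs (h ▸ hx), hs.1.1 hx⟩,
      hs.1.2⟩, fun u hu w hw huw => Finset.mem_filter.2 ⟨hs.2 u hu w hw huw, ?_⟩⟩
    intro hv
    rw [Sym2.mem_iff] at hv
    rcases hv with rfl | rfl
    · exact hvs hu
    · exact hvs hw

lemma telescope_Icc (g : ℕ → ℤ) (T : ℕ) :
    ∑ t ∈ Finset.Icc 1 T, (g t - g (t - 1)) = g T - g 0 := by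
  induction T with
  | zero => simp
  | succ n ih =>
    rw [Finset.sum_Icc_succ_top (by omega : 1 ≤ n + 1), ih]
    simp only [Nat.add_sub_cancel]
    ring

/-- The upper bound, for a one-sided edge removal. -/
lemma upper_bound_removal (D : ℕ) (hD : 1 ≤ D) (T : ℕ) (S S' : GraphStream)
    (hS : S.Valid T) (hrem : edgeRemovalStream T S S')
    (hdeg : ∀ v, (S.flat T).degree v ≤ D) :
    ∑ t ∈ Finset.Icc 1 T,
        |(((S.flat t).triangleCount : ℤ) - ((S.flat (t - 1)).triangleCount : ℤ))
          - (((S'.flat t).triangleCount : ℤ)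
              - ((S'.flat (t - 1)).triangleCount : ℤ))| ≤ (D : ℤ) - 1 := by
  classical
  rcases hrem with ⟨t0, e, he, rfl⟩ | ⟨v, -, hv1, rfl⟩
  · -- edge removal
    induction e using Sym2.ind with | _ a b =>
    have hab : a ≠ b := by
      have := (hS.2.2.2 t0 _ he).1
      simpa [Sym2.mk_isDiag_iff] using this
    have ht0T : t0 ≤ T := (hS.1 t0 (Or.inr ⟨_, he⟩)).2
    have heT : s(a, b) ∈ (S.flat T).edges :=
      Finset.mem_biUnion.2 ⟨t0, Finset.mem_range.2 (by omega), he⟩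
    set g : ℕ → ℤ := fun t =>
      ((triSet (S.flat t) \
        triSet ⟨(S.flat t).verts, (S.flat t).edges.erase s(a, b)⟩).card : ℤ)
      with hg
    have hsub : ∀ t, triSet ⟨(S.flat t).verts, (S.flat t).edges.erase s(a, b)⟩ ⊆
        triSet (S.flat t) := fun t =>
      triSet_mono (subset_refl _) (Finset.erase_subset _ _)
    have hgval : ∀ t, ((S.flat t).triangleCount : ℤ)
        - (((S.removeEdge s(a, b)).flat t).triangleCount : ℤ) = g t := by
      intro t
      rw [triangleCount_eq_card, triangleCount_eq_card, flat_removeEdge, hg]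
      have := Finset.card_sdiff_add_card_eq_card (hsub t)
      push_cast [← this]
      ring
    have hmono : ∀ t, g (t - 1) ≤ g t := by
      intro t
      rcases Nat.eq_zero_or_pos t with rfl | ht
      · simp
      have hsub2 : (triSet (S.flat (t - 1)) \
          triSet ⟨(S.flat (t - 1)).verts, (S.flat (t - 1)).edges.erase s(a, b)⟩) ⊆
          (triSet (S.flat t) \
          triSet ⟨(S.flat t).verts, (S.flat t).edges.erase s(a, b)⟩) := by
        intro s hs
        rw [Finset.mem_sdiff] at hs
        obtain ⟨u, hu, w, hw, huw, hne⟩ := exists_pair_eq hs.1 hs.2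
        refine Finset.mem_sdiff.2 ⟨triSet_mono (flat_verts_mono S (by omega))
          (flat_edges_mono S (by omega)) hs.1, ?_⟩
        intro hmem
        rw [mem_triSet] at hmem
        have := hmem.2 u hu w hw huw
        rw [hne] at this
        exact (Finset.mem_erase.1 this).1 rfl
      simp only [hg]
      exact_mod_cast Finset.card_le_card hsub2
    have habs : ∀ t ∈ Finset.Icc 1 T,
        |(((S.flat t).triangleCount : ℤ) - ((S.flat (t - 1)).triangleCount : ℤ))
          - ((((S.removeEdge s(a, b)).flat t).triangleCount : ℤ)
              - (((S.removeEdge s(a, b)).flat (t - 1)).triangleCount : ℤ))|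
          = g t - g (t - 1) := by
      intro t _
      have h1 := hgval t
      have h2 := hgval (t - 1)
      have h3 := hmono t
      rw [abs_of_nonneg (by linarith [h1, h2])]
      linarith [h1, h2]
    rw [Finset.sum_congr rfl habs, telescope_Icc]
    have hg0 : g 0 = 0 := by
      rw [hg]
      simp only
      rw [triSet_empty_edges]
      · simp
      · exact flat_zero_edges hS
    rw [hg0, sub_zero, hg]
    have hbound := card_triDiff_le (V := (S.flat T).verts)
      (E := (S.flat T).edges) hab heT
    have heta : (⟨(S.flat T).verts, (S.flat T).edges⟩ : FinGraph) = S.flat T := rfl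
    rw [heta] at hbound
    have hdega : ((S.flat T).edges.filter (fun e => a ∈ e)).card ≤ D := hdeg a
    have hpos : 1 ≤ ((S.flat T).edges.filter (fun e => a ∈ e)).card :=
      Finset.card_pos.2 ⟨s(a, b), Finset.mem_filter.2 ⟨heT, Sym2.mem_mk_left a b⟩⟩
    have : (triSet (S.flat T) \
        triSet ⟨(S.flat T).verts, (S.flat T).edges.erase s(a, b)⟩).card + 1 ≤ D := by
      omega
    simp only
    omega
  · -- node removal
    have hzero : ∀ t ≤ T, (((S.removeNode v).flat t).triangleCount : ℤ)
        = ((S.flat t).triangleCount : ℤ) := by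
      intro t ht
      rw [triangleCount_eq_card, triangleCount_eq_card, flat_removeNode]
      congr 2
      exact triSet_removeNode_eq (flat_edges_mono S ht) hv1
    have : ∀ t ∈ Finset.Icc 1 T,
        |(((S.flat t).triangleCount : ℤ) - ((S.flat (t - 1)).triangleCount : ℤ))
          - ((((S.removeNode v).flat t).triangleCount : ℤ)
              - (((S.removeNode v).flat (t - 1)).triangleCount : ℤ))| = 0 := by
      intro t ht
      rw [Finset.mem_Icc] at ht
      rw [hzero t (by omega), hzero (t - 1) (by omega)]
      simp
    rw [Finset.sum_congr rfl this]
    simp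
    omega

/-! ### The extremal example -/

/-- The extremal edge set: `0 — i` for `1 ≤ i ≤ D` and `1 — i` for `2 ≤ i ≤ D`. -/
def exE (D : ℕ) : Finset (Sym2 ℕ) :=
  ((Finset.Icc 1 D).image fun i => s(0, i)) ∪ ((Finset.Icc 2 D).image fun i => s(1, i))

/-- The extremal stream: everything arrives at time `1`. -/
def exS (D : ℕ) : GraphStream :=
  ⟨fun t => if t = 1 then Finset.range (D + 1) else ∅,
   fun t => if t = 1 then exE D else ∅⟩

lemma h01_mem (D : ℕ) (hD : 1 ≤ D) : s(0, 1) ∈ exE D :=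
  Finset.mem_union_left _ (Finset.mem_image.2 ⟨1, Finset.mem_Icc.2 ⟨le_refl 1, hD⟩, rfl⟩)

lemma h0i_mem (D : ℕ) {i : ℕ} (h1 : 1 ≤ i) (h2 : i ≤ D) : s(0, i) ∈ exE D :=
  Finset.mem_union_left _ (Finset.mem_image.2 ⟨i, Finset.mem_Icc.2 ⟨h1, h2⟩, rfl⟩)

lemma h1i_mem (D : ℕ) {i : ℕ} (h1 : 2 ≤ i) (h2 : i ≤ D) : s(1, i) ∈ exE D :=
  Finset.mem_union_right _ (Finset.mem_image.2 ⟨i, Finset.mem_Icc.2 ⟨h1, h2⟩, rfl⟩)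

lemma exS_valid (D : ℕ) (hD : 1 ≤ D) : (exS D).Valid 1 := by
  refine ⟨?_, ?_, ?_, ?_⟩
  · intro t ht
    by_contra h
    have ht1 : t ≠ 1 := by omega
    simp only [exS, if_neg ht1] at ht
    rcases ht with h' | h' <;> simp at h'
  · intro a b hab
    rcases eq_or_ne a 1 with rfl | ha
    · simp [exS, if_neg (Ne.symm hab)]
    · simp [exS, if_neg ha]
  · intro a b hab
    rcases eq_or_ne a 1 with rfl | ha
    · simp [exS, if_neg (Ne.symm hab)]
    · simp [exS, if_neg ha]
  · intro t e he
    have ht1 : t = 1 := by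
      by_contra h
      simp [exS, if_neg h] at he
    subst ht1
    simp only [exS, if_pos rfl] at he
    have hmem : ∀ v ∈ e, v ∈ Finset.range (D + 1) ∧ ¬ e.IsDiag := by
      rcases Finset.mem_union.1 he with h | h <;>
        obtain ⟨i, hi, rfl⟩ := Finset.mem_image.1 h <;>
        rw [Finset.mem_Icc] at hi <;>
        intro v hv <;> rw [Sym2.mem_iff] at hv <;>
        rcases hv with rfl | rfl <;>
        simp [Sym2.mk_isDiag_iff, Finset.mem_range] <;> omega
    constructor
    · rcases e.exists_rep with ⟨p, rfl⟩
      exact (hmem _ (Sym2.mem_mk_left _ _)).2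
    · intro v hv
      exact ⟨1, le_refl 1, by simp [exS, (hmem v hv).1]⟩

lemma valid_removeEdge {T : ℕ} {S : GraphStream} (e : Sym2 ℕ) (h : S.Valid T) :
    (S.removeEdge e).Valid T := by
  obtain ⟨h1, h2, h3, h4⟩ := h
  refine ⟨?_, h2, ?_, ?_⟩
  · intro t ht
    apply h1 t
    rcases ht with h' | h'
    · exact Or.inl h'
    · exact Or.inr ⟨h'.choose, Finset.mem_of_mem_erase h'.choose_spec⟩
  · intro a b hab
    exact (h3 a b hab).mono (Finset.erase_subset _ _) (Finset.erase_subset _ _)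
  · intro t e' he'
    exact h4 t e' (Finset.mem_of_mem_erase he')

lemma flat_one_eq (S : GraphStream) (h0n : S.nodes 0 = ∅) (h0e : S.edges 0 = ∅) :
    S.flat 1 = ⟨S.nodes 1, S.edges 1⟩ := by
  unfold GraphStream.flat
  congr 1 <;> [skip; skip] <;>
  · ext x
    simp only [Finset.mem_biUnion, Finset.mem_range]
    constructor
    · rintro ⟨i, hi, hx⟩
      interval_cases i
      · simp [h0n, h0e] at hx
      · exact hx
    · intro hx
      exact ⟨1, by omega, hx⟩

lemma exS_flat1 (D : ℕ) : (exS D).flat 1 = ⟨Finset.range (D + 1), exE D⟩ := by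
  rw [flat_one_eq] <;> simp [exS]

lemma exS_removeEdge_flat1 (D : ℕ) :
    ((exS D).removeEdge s(0, 1)).flat 1 =
      ⟨Finset.range (D + 1), (exE D).erase s(0, 1)⟩ := by
  rw [flat_removeEdge, exS_flat1]

lemma exE_degree (D : ℕ) (hD : 1 ≤ D) (v : ℕ) :
    ((exE D).filter (fun e => v ∈ e)).card ≤ D := by
  classical
  unfold exE
  rw [Finset.filter_union]
  set A := (((Finset.Icc 1 D).image fun i => s(0, i)).filter (fun e => v ∈ e)) with hA
  set B := (((Finset.Icc 2 D).image fun i => s(1, i)).filter (fun e => v ∈ e)) with hB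
  have hmemA : ∀ x ∈ A, ∃ i, 1 ≤ i ∧ i ≤ D ∧ x = s(0, i) ∧ (v = 0 ∨ v = i) := by
    intro x hx
    rw [hA, Finset.mem_filter] at hx
    obtain ⟨i, hi, rfl⟩ := Finset.mem_image.1 hx.1
    rw [Finset.mem_Icc] at hi
    have := hx.2
    rw [Sym2.mem_iff] at this
    exact ⟨i, hi.1, hi.2, rfl, this⟩
  have hmemB : ∀ x ∈ B, ∃ i, 2 ≤ i ∧ i ≤ D ∧ x = s(1, i) ∧ (v = 1 ∨ v = i) := by
    intro x hx
    rw [hB, Finset.mem_filter] at hx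
    obtain ⟨i, hi, rfl⟩ := Finset.mem_image.1 hx.1
    rw [Finset.mem_Icc] at hi
    have := hx.2
    rw [Sym2.mem_iff] at this
    exact ⟨i, hi.1, hi.2, rfl, this⟩
  have hcardA : A.card ≤ D := by
    calc A.card ≤ ((Finset.Icc 1 D).image fun i => s(0, i)).card :=
          Finset.card_le_card (Finset.filter_subset _ _)
      _ ≤ (Finset.Icc 1 D).card := Finset.card_image_le
      _ = D := by rw [Nat.card_Icc]; omega
  have hcardB : B.card ≤ D - 1 := by
    calc B.card ≤ ((Finset.Icc 2 D).image fun i => s(1, i)).card :=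
          Finset.card_le_card (Finset.filter_subset _ _)
      _ ≤ (Finset.Icc 2 D).card := Finset.card_image_le
      _ = D - 1 := by rw [Nat.card_Icc]; omega
  rcases eq_or_ne v 0 with rfl | hv0
  · have hBe : B = ∅ := by
      rw [Finset.eq_empty_iff_forall_notMem]
      intro x hx
      obtain ⟨i, hi2, -, -, h⟩ := hmemB x hx
      omega
    calc (A ∪ B).card = A.card := by rw [hBe, Finset.union_empty]
      _ ≤ D := hcardA
  rcases eq_or_ne v 1 with rfl | hv1
  · have hAs : A ⊆ {s(0, 1)} := by
      intro x hx
      obtain ⟨i, -, -, rfl, h⟩ := hmemA x hx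
      have : i = 1 := by omega
      subst this
      exact Finset.mem_singleton_self _
    calc (A ∪ B).card ≤ A.card + B.card := Finset.card_union_le _ _
      _ ≤ 1 + (D - 1) := add_le_add (le_trans (Finset.card_le_card hAs) (by simp)) hcardB
      _ ≤ D := by omega
  -- v ≥ 2
  rcases le_or_gt v D with hvD | hvD
  · have hAs : A ⊆ {s(0, v)} := by
      intro x hx
      obtain ⟨i, -, -, rfl, h⟩ := hmemA x hx
      have : i = v := by omega
      subst this
      exact Finset.mem_singleton_self _
    have hBs : B ⊆ {s(1, v)} := by
      intro x hx
      obtain ⟨i, -, -, rfl, h⟩ := hmemB x hx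
      have : i = v := by omega
      subst this
      exact Finset.mem_singleton_self _
    have hD2 : 2 ≤ D := by omega
    calc (A ∪ B).card ≤ A.card + B.card := Finset.card_union_le _ _
      _ ≤ 1 + 1 := add_le_add (le_trans (Finset.card_le_card hAs) (by simp))
            (le_trans (Finset.card_le_card hBs) (by simp))
      _ ≤ D := hD2
  · have hAe : A = ∅ := by
      rw [Finset.eq_empty_iff_forall_notMem]
      intro x hx
      obtain ⟨i, -, hiD, -, h⟩ := hmemA x hx
      omega
    have hBe : B = ∅ := by
      rw [Finset.eq_empty_iff_forall_notMem]
      intro x hx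
      obtain ⟨i, -, hiD, -, h⟩ := hmemB x hx
      omega
    simp [hAe, hBe]

lemma tri_structure (D : ℕ) {E : Finset (Sym2 ℕ)} {s : Finset ℕ} (hE : E ⊆ exE D)
    (hs : s ∈ triSet ⟨Finset.range (D + 1), E⟩) :
    ∃ i, 2 ≤ i ∧ i ≤ D ∧ 0 ∈ s ∧ 1 ∈ s ∧ i ∈ s ∧ s = {0, 1, i} := by
  classical
  rw [mem_triSet] at hs
  obtain ⟨⟨hsV, hcard⟩, hedge⟩ := hs
  have hexE : ∀ u ∈ s, ∀ w ∈ s, u ≠ w → (u = 0 ∨ u = 1) ∨ (w = 0 ∨ w = 1) := by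
    intro u hu w hw huw
    have := hE (hedge u hu w hw huw)
    unfold exE at this
    rcases Finset.mem_union.1 this with h | h <;>
      obtain ⟨i, hi, heq⟩ := Finset.mem_image.1 h <;>
      rw [Sym2.eq_iff] at heq <;> rcases heq with ⟨h1, h2⟩ | ⟨h1, h2⟩ <;> omega
  set t := s.filter (fun x => 2 ≤ x) with ht
  have hsub : s ⊆ insert 0 (insert 1 t) := by
    intro x hx
    rcases Nat.lt_or_ge x 2 with h | h
    · interval_cases x <;> simp
    · simp only [Finset.mem_insert]
      exact Or.inr (Or.inr (Finset.mem_filter.2 ⟨hx, h⟩))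
  have htcard1 : 1 ≤ t.card := by
    by_contra h
    have hte : t = ∅ := by
      rw [← Finset.card_eq_zero]; omega
    have : s.card ≤ 2 := by
      calc s.card ≤ (insert 0 (insert 1 t)).card := Finset.card_le_card hsub
        _ ≤ _ := by
            rw [hte]
            simp
    omega
  have htcard2 : t.card ≤ 1 := by
    by_contra h
    obtain ⟨u, hu, w, hw, huw⟩ := Finset.one_lt_card.1 (show 1 < t.card by omega)
    rw [ht, Finset.mem_filter] at hu hw
    have := hexE u hu.1 w hw.1 huw
    omega
  obtain ⟨i, hti⟩ := Finset.card_eq_one.1 (show t.card = 1 by omega)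
  have hit : i ∈ t := hti ▸ Finset.mem_singleton_self i
  rw [ht, Finset.mem_filter] at hit
  have hi2 : 2 ≤ i := hit.2
  have his : i ∈ s := hit.1
  have hiD : i ≤ D := by
    have := hsV his
    rw [Finset.mem_range] at this
    omega
  have h0s : 0 ∈ s := by
    by_contra h0
    have : s ⊆ insert 1 t := by
      intro x hx
      rcases Finset.mem_insert.1 (hsub hx) with rfl | hx'
      · exact absurd hx h0
      · exact hx'
    have := Finset.card_le_card this
    rw [hti] at this
    have h2 := Finset.card_insert_le 1 ({i} : Finset ℕ)
    simp only [Finset.card_singleton] at h2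
    omega
  have h1s : 1 ∈ s := by
    by_contra h1
    have : s ⊆ insert 0 t := by
      intro x hx
      rcases Finset.mem_insert.1 (hsub hx) with rfl | hx'
      · exact Finset.mem_insert_self 0 t
      rcases Finset.mem_insert.1 hx' with rfl | hx''
      · exact absurd hx h1
      · exact Finset.mem_insert_of_mem hx''
    have := Finset.card_le_card this
    rw [hti] at this
    have h2 := Finset.card_insert_le 0 ({i} : Finset ℕ)
    simp only [Finset.card_singleton] at h2
    omega
  refine ⟨i, hi2, hiD, h0s, h1s, his, ?_⟩
  apply Finset.eq_of_subset_of_card_le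
  · rw [hti] at hsub
    exact hsub
  · rw [hcard]
    have c1 := Finset.card_insert_le 0 (insert 1 ({i} : Finset ℕ))
    have c2 := Finset.card_insert_le 1 ({i} : Finset ℕ)
    simp only [Finset.card_singleton] at c1 c2
    omega

lemma triSet_exS' (D : ℕ) :
    triSet ⟨Finset.range (D + 1), (exE D).erase s(0, 1)⟩ = ∅ := by
  rw [Finset.eq_empty_iff_forall_notMem]
  intro s hs
  obtain ⟨i, -, -, h0s, h1s, -, -⟩ :=
    tri_structure D (Finset.erase_subset _ _) hs
  rw [mem_triSet] at hs
  have := hs.2 0 h0s 1 h1s (by omega)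
  exact (Finset.mem_erase.1 this).1 rfl

lemma triSet_exS (D : ℕ) (hD : 1 ≤ D) :
    triSet ⟨Finset.range (D + 1), exE D⟩ =
      (Finset.Icc 2 D).image (fun i => ({0, 1, i} : Finset ℕ)) := by
  classical
  ext s
  constructor
  · intro hs
    obtain ⟨i, hi2, hiD, -, -, -, rfl⟩ := tri_structure D (subset_refl _) hs
    exact Finset.mem_image.2 ⟨i, Finset.mem_Icc.2 ⟨hi2, hiD⟩, rfl⟩
  · intro hs
    obtain ⟨i, hi, rfl⟩ := Finset.mem_image.1 hs
    rw [Finset.mem_Icc] at hi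
    rw [mem_triSet]
    refine ⟨⟨?_, ?_⟩, ?_⟩
    · intro x hx
      simp only [Finset.mem_insert, Finset.mem_singleton] at hx
      rw [Finset.mem_range]
      rcases hx with rfl | rfl | rfl <;> omega
    · rw [Finset.card_insert_of_notMem (by simp; omega),
        Finset.card_insert_of_notMem (by simp; omega), Finset.card_singleton]
    · intro u hu v hv huv
      simp only [Finset.mem_insert, Finset.mem_singleton] at hu hv
      have e01 : s(0, 1) ∈ exE D := h01_mem D hD
      have e0i : s(0, i) ∈ exE D := h0i_mem D (by omega) hi.2
      have e1i : s(1, i) ∈ exE D := h1i_mem D hi.1 hi.2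
      rcases hu with rfl | rfl | rfl <;> rcases hv with rfl | rfl | rfl <;>
        first
          | exact absurd rfl huv
          | exact e01
          | exact e0i
          | exact e1i
          | (rw [Sym2.eq_swap]; first | exact e01 | exact e0i | exact e1i)

lemma triSet_exS_card (D : ℕ) (hD : 1 ≤ D) :
    (triSet ⟨Finset.range (D + 1), exE D⟩).card = D - 1 := by
  have hinj : Set.InjOn (fun i => ({0, 1, i} : Finset ℕ)) (Finset.Icc 2 D) := by
    intro i hi j hj hij
    rw [Finset.mem_coe, Finset.mem_Icc] at hi hj
    simp only at hij
    have : i ∈ ({0, 1, j} : Finset ℕ) := hij ▸ (by simp : i ∈ ({0, 1, i} : Finset ℕ))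
    simp only [Finset.mem_insert, Finset.mem_singleton] at this
    omega
  rw [triSet_exS D hD, Finset.card_image_of_injOn hinj, Nat.card_Icc]
  omega

/-- incremental edge-sensitivity of triangle counts.
For every pair of edge-neighboring insertion-only graph streams of length `T` whose
flattened graphs have maximum degree at most `D`, the ℓ₁ distance between the increment
sequences of the triangle counts is at most `D - 1`; moreover the bound is attained,
even by a pair of such streams of length `T = 1`. -/
theorem triangle_incremental_edge_sensitivity (D : ℕ) (hD : 1 ≤ D) :
    (∀ (T : ℕ) (S S' : GraphStream), S.Valid T → S'.Valid T →
      edgeNeighborStream T S S' →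
      (∀ v, (S.flat T).degree v ≤ D) → (∀ v, (S'.flat T).degree v ≤ D) →
      ∑ t ∈ Finset.Icc 1 T,
          |(((S.flat t).triangleCount : ℤ) - ((S.flat (t - 1)).triangleCount : ℤ))
            - (((S'.flat t).triangleCount : ℤ)
                - ((S'.flat (t - 1)).triangleCount : ℤ))| ≤ (D : ℤ) - 1) ∧
    (∃ S S' : GraphStream, S.Valid 1 ∧ S'.Valid 1 ∧ edgeNeighborStream 1 S S' ∧
      (∀ v, (S.flat 1).degree v ≤ D) ∧ (∀ v, (S'.flat 1).degree v ≤ D) ∧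
      ∑ t ∈ Finset.Icc 1 1,
          |(((S.flat t).triangleCount : ℤ) - ((S.flat (t - 1)).triangleCount : ℤ))
            - (((S'.flat t).triangleCount : ℤ)
                - ((S'.flat (t - 1)).triangleCount : ℤ))| = (D : ℤ) - 1) := by
  constructor
  · intro T S S' hS hS' hnb hdeg hdeg'
    rcases hnb with h | h
    · exact upper_bound_removal D hD T S S' hS h hdeg
    · have hsw := upper_bound_removal D hD T S' S hS' h hdeg'
      have hcongr : ∀ t ∈ Finset.Icc 1 T,
          |(((S.flat t).triangleCount : ℤ) - ((S.flat (t - 1)).triangleCount : ℤ))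
            - (((S'.flat t).triangleCount : ℤ)
                - ((S'.flat (t - 1)).triangleCount : ℤ))|
          = |(((S'.flat t).triangleCount : ℤ) - ((S'.flat (t - 1)).triangleCount : ℤ))
            - (((S.flat t).triangleCount : ℤ)
                - ((S.flat (t - 1)).triangleCount : ℤ))| :=
        fun t _ => abs_sub_comm _ _
      rw [Finset.sum_congr rfl hcongr]
      exact hsw
  · refine ⟨exS D, (exS D).removeEdge s(0, 1), exS_valid D hD,
      valid_removeEdge _ (exS_valid D hD), ?_, ?_, ?_, ?_⟩
    · exact Or.inl (Or.inl ⟨1, s(0, 1), by simpa [exS] using h01_mem D hD, rfl⟩)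
    · intro v
      rw [exS_flat1]
      exact exE_degree D hD v
    · intro v
      rw [exS_removeEdge_flat1]
      exact le_trans (Finset.card_le_card
        (Finset.filter_subset_filter _ (Finset.erase_subset _ _))) (exE_degree D hD v)
    · have c0 : ((exS D).flat 0).triangleCount = 0 := by
        rw [triangleCount_eq_card,
          triSet_empty_edges (flat_zero_edges (exS_valid D hD)), Finset.card_empty]
      have c0' : (((exS D).removeEdge s(0, 1)).flat 0).triangleCount = 0 := by
        rw [triangleCount_eq_card,
          triSet_empty_edges (flat_zero_edges (valid_removeEdge _ (exS_valid D hD))),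
          Finset.card_empty]
      have c1 : ((exS D).flat 1).triangleCount = D - 1 := by
        rw [triangleCount_eq_card, exS_flat1, triSet_exS_card D hD]
      have c1' : (((exS D).removeEdge s(0, 1)).flat 1).triangleCount = 0 := by
        rw [triangleCount_eq_card, exS_removeEdge_flat1, triSet_exS' D,
          Finset.card_empty]
      rw [Finset.Icc_self, Finset.sum_singleton]
      norm_num [c1, c1', c0, c0']
      omega
end
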